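/- Let |v⟩ ∈ K_1 ⊗ K_2 and |u⟩ ∈ K_2 ⊗ K_3 be vectors of norm at most 1. Then the operator ⟨u|_{2,3} |v⟩_{1,2} : K_3 → K_1 obtained by contracting over K_2 has trace norm at most 1. -/

import Mathlib

open Finset Matrix
open scoped Kronecker ComplexOrder

/-- `x` majorizes `y`: every subset-sum of `y` is dominated by some subset-sum of `x`
of the same cardinality (equivalently, all top-`k` partial sums of the non-increasing
rearrangements dominate), and the total sums agree. -/
def Majorizes {ι κ : Type*} [Fintype ι] [Fintype κ] (x : ι → ℝ) (y : κ → ℝ) : Prop :=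
  (∀ t : Finset κ, ∃ s : Finset ι, s.card = t.card ∧ ∑ j ∈ t, y j ≤ ∑ i ∈ s, x i) ∧
    ∑ j, y j = ∑ i, x i
/-- The trace norm `tr √(M* M)` (sum of singular values) of a matrix. -/
noncomputable def traceNorm {m n : Type*} [Fintype m] [Fintype n] [DecidableEq n]
    (M : Matrix m n ℂ) : ℝ :=
  ∑ i, Real.sqrt ((Matrix.isHermitian_conjTranspose_mul_self M).eigenvalues i)


local notation "⟪" x ", " y "⟫" => @inner ℂ _ _ x y

/-- shorthand: a bare function as a Euclidean space element -/
noncomputable def toEuc {n : Type*} [Fintype n] (x : n → ℂ) : EuclideanSpace ℂ n :=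
  (WithLp.equiv 2 _).symm x

lemma toEuc_inner {n : Type*} [Fintype n] (x y : n → ℂ) :
    ⟪toEuc x, toEuc y⟫ = dotProduct (star x) y := by
  rw [toEuc, toEuc, EuclideanSpace.inner_eq_star_dotProduct]
  simp [dotProduct_comm]

lemma toEuc_coe {n : Type*} [Fintype n] (x : EuclideanSpace ℂ n) :
    toEuc (WithLp.equiv 2 _ x) = x := by
  simp [toEuc]

lemma toEuc_apply {n : Type*} [Fintype n] (x : n → ℂ) (i : n) : toEuc x i = x i := rfl

lemma euc_apply {n : Type*} [Fintype n] (x : EuclideanSpace ℂ n) (i : n) :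
    (WithLp.equiv 2 _ x : n → ℂ) i = x i := rfl

lemma toEuc_normsq {n : Type*} [Fintype n] (x : n → ℂ) :
    ‖toEuc x‖ ^ 2 = ∑ i, ‖x i‖ ^ 2 := by
  rw [EuclideanSpace.norm_eq, Real.sq_sqrt (by positivity)]
  simp [toEuc]

/-- contracting `|v⟩ ∈ K₁ ⊗ K₂` with `⟨u|`, `|u⟩ ∈ K₂ ⊗ K₃`, over `K₂`
yields an operator `K₃ → K₁` of trace norm at most 1, provided `‖v‖, ‖u‖ ≤ 1`. -/
theorem contraction_trace_norm_le_one {m₁ m₂ m₃ : Type*}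
    [Fintype m₁] [DecidableEq m₁] [Fintype m₂] [Fintype m₃] [DecidableEq m₃]
    (v : m₁ × m₂ → ℂ) (u : m₂ × m₃ → ℂ)
    (hv : ∑ x, Complex.normSq (v x) ≤ 1) (hu : ∑ x, Complex.normSq (u x) ≤ 1) :
    traceNorm (Matrix.of fun (a : m₁) (c : m₃) => ∑ b, v (a, b) * star (u (b, c))) ≤ 1 := by
  classical
  set V : Matrix m₁ m₂ ℂ := Matrix.of fun a b => v (a, b) with hVdef
  set W : Matrix m₂ m₃ ℂ := Matrix.of fun b c => star (u (b, c)) with hWdef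
  set M : Matrix m₁ m₃ ℂ :=
    Matrix.of (fun (a : m₁) (c : m₃) => ∑ b, v (a, b) * star (u (b, c))) with hMdef
  have hMVW : M = V * W := by
    ext a c
    simp [hMdef, hVdef, hWdef, Matrix.mul_apply]
  have h : (Mᴴ * M).IsHermitian := Matrix.isHermitian_conjTranspose_mul_self M
  set lam : m₃ → ℝ := h.eigenvalues with hlam
  set w : OrthonormalBasis m₃ ℂ (EuclideanSpace ℂ m₃) := h.eigenvectorBasis with hwdef
  -- Gram matrix of the images M w i
  have key3 : ∀ i j : m₃,
      ⟪toEuc (M *ᵥ ⇑(w i)), toEuc (M *ᵥ ⇑(w j))⟫ = if i = j then (lam j : ℂ) else 0 := by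
    intro i j
    rw [toEuc_inner]
    rw [Matrix.star_mulVec, Matrix.dotProduct_mulVec, Matrix.vecMul_vecMul,
      ← Matrix.dotProduct_mulVec, h.mulVec_eigenvectorBasis, dotProduct_smul]
    have horth := orthonormal_iff_ite.mp w.orthonormal i j
    rw [EuclideanSpace.inner_eq_star_dotProduct] at horth
    rw [dotProduct_comm] at horth
    rw [← hwdef, horth]
    by_cases hij : i = j <;> simp [hij, Complex.real_smul, hlam]
  have hnormsq : ∀ i : m₃, ‖toEuc (M *ᵥ ⇑(w i))‖ ^ 2 = lam i := by
    intro i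
    have h0 := key3 i i
    rw [if_pos rfl, inner_self_eq_norm_sq_to_K] at h0
    have h1 : ((‖toEuc (M *ᵥ ⇑(w i))‖ ^ 2 : ℝ) : ℂ) = ((lam i : ℝ) : ℂ) := by
      push_cast
      exact h0
    exact_mod_cast h1
  have lam_nonneg : ∀ i, 0 ≤ lam i := fun i => (hnormsq i) ▸ sq_nonneg _
  have hnorm : ∀ i : m₃, ‖toEuc (M *ᵥ ⇑(w i))‖ = Real.sqrt (lam i) := by
    intro i
    rw [← hnormsq i, Real.sqrt_sq (norm_nonneg _)]
  -- splitting the inner product through K₂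
  have key1 : ∀ (q : m₁ → ℂ) (x : m₃ → ℂ),
      ⟪toEuc q, toEuc (M *ᵥ x)⟫ = ⟪toEuc (Vᴴ *ᵥ q), toEuc (W *ᵥ x)⟫ := by
    intro q x
    rw [toEuc_inner, toEuc_inner, hMVW, Matrix.star_mulVec,
      conjTranspose_conjTranspose, ← Matrix.mulVec_mulVec, Matrix.dotProduct_mulVec]
  -- the orthonormal family of left singular vectors (for nonzero singular values)
  set S : Finset m₃ := Finset.univ.filter (fun i => lam i ≠ 0) with hS
  let ι := {i : m₃ // lam i ≠ 0}
  let y : ι → EuclideanSpace ℂ m₁ := fun i =>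
    (((Real.sqrt (lam i.1))⁻¹ : ℝ) : ℂ) • toEuc (M *ᵥ ⇑(w i.1))
  have lam_pos : ∀ i : ι, 0 < lam i.1 := fun i => lt_of_le_of_ne (lam_nonneg i.1) (Ne.symm i.2)
  have sqrt_pos : ∀ i : ι, 0 < Real.sqrt (lam i.1) := fun i => Real.sqrt_pos.mpr (lam_pos i)
  have hy_inner : ∀ i j : ι, ⟪y i, y j⟫ =
      (((Real.sqrt (lam i.1))⁻¹ : ℝ) : ℂ) * (((Real.sqrt (lam j.1))⁻¹ : ℝ) : ℂ) *
        (if i.1 = j.1 then (lam j.1 : ℂ) else 0) := by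
    intro i j
    show ⟪(((Real.sqrt (lam i.1))⁻¹ : ℝ) : ℂ) • toEuc (M *ᵥ ⇑(w i.1)),
          (((Real.sqrt (lam j.1))⁻¹ : ℝ) : ℂ) • toEuc (M *ᵥ ⇑(w j.1))⟫ = _
    rw [inner_smul_left, inner_smul_right, key3 i.1 j.1, Complex.conj_ofReal]
    ring
  have hy_on : Orthonormal ℂ y := by
    rw [orthonormal_iff_ite]
    intro i j
    rw [hy_inner i j]
    by_cases hij : i = j
    · subst hij
      rw [if_pos rfl, if_pos rfl]
      have hs : (Real.sqrt (lam i.1) : ℝ) ≠ 0 := (sqrt_pos i).ne'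
      rw [← Complex.ofReal_mul, ← Complex.ofReal_mul]
      rw [show ((Real.sqrt (lam i.1))⁻¹ * (Real.sqrt (lam i.1))⁻¹ * lam i.1 : ℝ) = 1 by
        rw [← Real.mul_self_sqrt (lam_nonneg i.1)]; field_simp; rw [Real.sqrt_sq (Real.sqrt_nonneg _)]]
      norm_num
    · have hne : i.1 ≠ j.1 := fun hh => hij (Subtype.ext hh)
      rw [if_neg hne, if_neg hij, mul_zero]
  -- singular value as an inner product
  have hsv : ∀ i : ι, Real.sqrt (lam i.1) ≤
      ‖toEuc (Vᴴ *ᵥ (WithLp.equiv 2 _ (y i)))‖ * ‖toEuc (W *ᵥ ⇑(w i.1))‖ := by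
    intro i
    have hinner : ⟪y i, toEuc (M *ᵥ ⇑(w i.1))⟫ = (Real.sqrt (lam i.1) : ℂ) := by
      show ⟪(((Real.sqrt (lam i.1))⁻¹ : ℝ) : ℂ) • toEuc (M *ᵥ ⇑(w i.1)),
            toEuc (M *ᵥ ⇑(w i.1))⟫ = _
      rw [inner_smul_left, key3 i.1 i.1, if_pos rfl, Complex.conj_ofReal,
        ← Complex.ofReal_mul]
      congr 1
      rw [← Real.mul_self_sqrt (lam_nonneg i.1)]
      field_simp
      rw [Real.sqrt_sq (Real.sqrt_nonneg _), pow_two, mul_div_assoc, div_self (sqrt_pos i).ne', mul_one]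
    have h1 : Real.sqrt (lam i.1) = ‖⟪y i, toEuc (M *ᵥ ⇑(w i.1))⟫‖ := by
      rw [hinner, Complex.norm_real, Real.norm_of_nonneg (Real.sqrt_nonneg _)]
    have h2 : ⟪y i, toEuc (M *ᵥ ⇑(w i.1))⟫
        = ⟪toEuc (Vᴴ *ᵥ (WithLp.equiv 2 _ (y i))), toEuc (W *ᵥ ⇑(w i.1))⟫ := by
      rw [← key1, toEuc_coe]
    rw [h1, h2]
    exact norm_inner_le_norm _ _
  -- Bessel bounds
  have B1 : ∑ i : ι, ‖toEuc (Vᴴ *ᵥ (WithLp.equiv 2 _ (y i)))‖ ^ 2 ≤ 1 := by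
    have step : ∀ i : ι, ‖toEuc (Vᴴ *ᵥ (WithLp.equiv 2 _ (y i)))‖ ^ 2
        = ∑ b : m₂, ‖⟪y i, toEuc (fun a => v (a, b))⟫‖ ^ 2 := by
      intro i
      rw [toEuc_normsq]
      refine Finset.sum_congr rfl fun b _ => ?_
      have e : ((Vᴴ *ᵥ (WithLp.equiv 2 _ (y i))) b)
          = ⟪toEuc (fun a => v (a, b)), y i⟫ := by
        rw [← toEuc_coe (y i), toEuc_inner]
        simp [Matrix.mulVec, dotProduct, hVdef, Matrix.conjTranspose_apply, mul_comm, toEuc_apply, euc_apply]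
      rw [e, ← norm_inner_symm]
    calc ∑ i : ι, ‖toEuc (Vᴴ *ᵥ (WithLp.equiv 2 _ (y i)))‖ ^ 2
        = ∑ b : m₂, ∑ i : ι, ‖⟪y i, toEuc (fun a => v (a, b))⟫‖ ^ 2 := by
          rw [Finset.sum_comm]
          exact Finset.sum_congr rfl fun i _ => step i
      _ ≤ ∑ b : m₂, ‖toEuc (fun a => v (a, b))‖ ^ 2 :=
          Finset.sum_le_sum fun b _ => hy_on.sum_inner_products_le _
      _ = ∑ b : m₂, ∑ a : m₁, ‖v (a, b)‖ ^ 2 :=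
          Finset.sum_congr rfl fun b _ => toEuc_normsq _
      _ = ∑ x, Complex.normSq (v x) := by
          rw [Fintype.sum_prod_type, Finset.sum_comm]
          refine Finset.sum_congr rfl fun b _ => Finset.sum_congr rfl fun a _ => ?_
          rw [Complex.normSq_eq_norm_sq]
      _ ≤ 1 := hv
  have B2 : ∑ i : ι, ‖toEuc (W *ᵥ ⇑(w i.1))‖ ^ 2 ≤ 1 := by
    have hw_on : Orthonormal ℂ (fun i : ι => w i.1) :=
      w.orthonormal.comp _ Subtype.val_injective
    have step : ∀ i : ι, ‖toEuc (W *ᵥ ⇑(w i.1))‖ ^ 2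
        = ∑ b : m₂, ‖⟪w i.1, toEuc (fun c => u (b, c))⟫‖ ^ 2 := by
      intro i
      rw [toEuc_normsq]
      refine Finset.sum_congr rfl fun b _ => ?_
      have e : ((W *ᵥ ⇑(w i.1)) b) = ⟪toEuc (fun c => u (b, c)), w i.1⟫ := by
        rw [← toEuc_coe (w i.1), toEuc_inner]
        simp [Matrix.mulVec, dotProduct, hWdef, toEuc_apply, euc_apply]
      rw [e, ← norm_inner_symm]
    calc ∑ i : ι, ‖toEuc (W *ᵥ ⇑(w i.1))‖ ^ 2
        = ∑ b : m₂, ∑ i : ι, ‖⟪w i.1, toEuc (fun c => u (b, c))⟫‖ ^ 2 := by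
          rw [Finset.sum_comm]
          exact Finset.sum_congr rfl fun i _ => step i
      _ ≤ ∑ b : m₂, ‖toEuc (fun c => u (b, c))‖ ^ 2 :=
          Finset.sum_le_sum fun b _ => hw_on.sum_inner_products_le _
      _ = ∑ b : m₂, ∑ c : m₃, ‖u (b, c)‖ ^ 2 :=
          Finset.sum_congr rfl fun b _ => toEuc_normsq _
      _ = ∑ x, Complex.normSq (u x) := by
          rw [Fintype.sum_prod_type]
          refine Finset.sum_congr rfl fun b _ => Finset.sum_congr rfl fun c _ => ?_
          rw [Complex.normSq_eq_norm_sq]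
      _ ≤ 1 := hu
  -- put it together
  have hTN : traceNorm M = ∑ i : ι, Real.sqrt (lam i.1) := by
    show (∑ i, Real.sqrt ((Matrix.isHermitian_conjTranspose_mul_self M).eigenvalues i)) = _
    have e1 : (∑ i, Real.sqrt (lam i)) = ∑ i ∈ S, Real.sqrt (lam i) := by
      symm
      apply Finset.sum_subset (Finset.subset_univ _)
      intro x _ hx
      have : lam x = 0 := by
        by_contra h0
        exact hx (by simp [hS, h0])
      rw [this, Real.sqrt_zero]
    have e2 : (∑ i ∈ S, Real.sqrt (lam i)) = ∑ i : ι, Real.sqrt (lam i.1) :=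
      Finset.sum_subtype S (by simp [hS]) _
    exact e1.trans e2
  rw [hTN]
  have hT1 : (∑ i : ι, Real.sqrt (lam i.1)) ≤
      ∑ i : ι, ‖toEuc (Vᴴ *ᵥ (WithLp.equiv 2 _ (y i)))‖ * ‖toEuc (W *ᵥ ⇑(w i.1))‖ :=
    Finset.sum_le_sum fun i _ => hsv i
  have hCS := Finset.sum_mul_sq_le_sq_mul_sq Finset.univ
    (fun i : ι => ‖toEuc (Vᴴ *ᵥ (WithLp.equiv 2 _ (y i)))‖)
    (fun i : ι => ‖toEuc (W *ᵥ ⇑(w i.1))‖)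
  have hTnn : (0:ℝ) ≤ ∑ i : ι, Real.sqrt (lam i.1) :=
    Finset.sum_nonneg fun i _ => Real.sqrt_nonneg _
  have final : ∀ a b t s : ℝ, 0 ≤ t → t ≤ s → s ^ 2 ≤ a * b → a ≤ 1 → b ≤ 1 →
      0 ≤ a → 0 ≤ b → t ≤ 1 := by
    intro a b t s h1 h2 h3 h4 h5 h6 h7
    nlinarith
  exact final _ _ _ _ hTnn hT1 hCS B1 B2
    (Finset.sum_nonneg (fun (i : ι) _ => sq_nonneg ‖toEuc (Vᴴ *ᵥ (WithLp.equiv 2 _ (y i)))‖))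
    (Finset.sum_nonneg (fun (i : ι) _ => sq_nonneg ‖toEuc (W *ᵥ ⇑(w i.1))‖))
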